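/- arXiv:2511.11843 — 4 statements merged into one kernel-verified Lean document; each statement's English description precedes it below -/
import Mathlib

section
/- Let P ≥ 2 be an integer and let w_1, …, w_m be nonnegative real weights with total W = Σ_{i=1}^m w_i > 0 such that w_i ≤ W/(P·ln P) for every i. Suppose each ball i is placed into one of P bins independently and uniformly at random. Then there is an absolute constant c₂ ≥ 1 (independent of m, P and the weights) such that with probability at least 1 − 1/P, every bin receives total weight at most c₂·W/P. -/
lemma exp_le_one_add_two_mul {x : ℝ} (h0 : 0 ≤ x) (h1 : x ≤ 1) :
    Real.exp x ≤ 1 + 2 * x := by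
  have h := convexOn_exp.2 (Set.mem_univ (0:ℝ)) (Set.mem_univ (1:ℝ))
    (by linarith : (0:ℝ) ≤ 1 - x) h0 (by ring)
  simp only [smul_eq_mul, mul_zero, mul_one, zero_add, Real.exp_zero] at h
  have he : Real.exp 1 ≤ 3 := by have := Real.exp_one_lt_d9; linarith
  nlinarith

/-- **Weighted balls into bins, upper tail.**
Let `P ≥ 2` be an integer and `w 1, …, w m` nonnegative real weights with total
`W = ∑ i, w i > 0` such that `w i ≤ W / (P · ln P)` for every `i`.  Each ball `i` is placed
into one of `P` bins independently and uniformly at random (modeled by the uniform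
distribution on the function space `Fin m → Fin P`).  Then there is an absolute constant
`c₂ ≥ 1` such that with probability at least `1 - 1/P`, every bin receives total weight
at most `c₂ · W / P`. -/
theorem weighted_balls_into_bins_upper :
    ∃ c₂ : ℝ, 1 ≤ c₂ ∧
      ∀ (m P : ℕ), 2 ≤ P →
        ∀ w : Fin m → ℝ, (∀ i, 0 ≤ w i) →
          ∀ W : ℝ, W = ∑ i, w i → 0 < W →
            (∀ i, w i ≤ W / (P * Real.log P)) →
            ((Set.ncard {f : Fin m → Fin P |
                ∀ b : Fin P,
                  (∑ i ∈ Finset.univ.filter (fun i => f i = b), w i) ≤ c₂ * W / P} : ℝ)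
              / (P : ℝ) ^ m) ≥ 1 - 1 / (P : ℝ) := by
  refine ⟨4, by norm_num, ?_⟩
  intro m P hP w hw W hWsum hWpos hwle
  have hP1 : (1:ℝ) < P := by exact_mod_cast lt_of_lt_of_le one_lt_two (by exact_mod_cast hP)
  have hP0 : (0:ℝ) < P := by linarith
  have hlog : 0 < Real.log P := Real.log_pos hP1
  set t : ℝ := P * Real.log P / W with ht_def
  have ht : 0 < t := div_pos (mul_pos hP0 hlog) hWpos
  have htW : t * W = P * Real.log P := by
    rw [ht_def, div_mul_cancel₀ _ hWpos.ne']
  have htw : ∀ i, t * w i ≤ 1 := by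
    intro i
    have h1 : t * w i ≤ t * (W / (P * Real.log P)) :=
      mul_le_mul_of_nonneg_left (hwle i) ht.le
    have h2 : t * (W / (P * Real.log P)) = 1 := by
      rw [ht_def]
      field_simp [hWpos.ne', hP0.ne', hlog.ne']
    linarith
  set load : (Fin m → Fin P) → Fin P → ℝ :=
    fun f b => ∑ i ∈ Finset.univ.filter (fun i => f i = b), w i with hload
  -- key identity: MGF factorizes
  have key : ∀ b : Fin P, ∑ f : Fin m → Fin P, Real.exp (t * load f b)
      = ∏ i, ((P:ℝ) - 1 + Real.exp (t * w i)) := by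
    intro b
    have h1 : ∀ f : Fin m → Fin P, Real.exp (t * load f b)
        = ∏ i, Real.exp (t * if f i = b then w i else 0) := by
      intro f
      rw [← Real.exp_sum]
      congr 1
      rw [hload]
      simp only
      rw [Finset.sum_filter, Finset.mul_sum]
    simp only [h1]
    have h2 : ∑ f : Fin m → Fin P, ∏ i, Real.exp (t * if f i = b then w i else 0)
        = ∏ i, ∑ x : Fin P, Real.exp (t * if x = b then w i else 0) := by
      rw [Finset.prod_univ_sum]; simp [Fintype.piFinset_univ]
    rw [h2]
    refine Finset.prod_congr rfl fun i _ => ?_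
    have h3 : ∀ x : Fin P, Real.exp (t * if x = b then w i else 0)
        = (if x = b then Real.exp (t * w i) - 1 else 0) + 1 := by
      intro x; split <;> simp
    simp only [h3, Finset.sum_add_distrib,
      Finset.sum_ite_eq' Finset.univ b (fun _ => Real.exp (t * w i) - 1)]
    simp [Finset.card_univ]
    ring
  -- bound the product
  have prod_bound : ∏ i, ((P:ℝ) - 1 + Real.exp (t * w i)) ≤ (P:ℝ)^m * (P:ℝ)^2 := by
    have sum_eq : ∑ i, 2 * (t * w i) / (P:ℝ) = 2 * Real.log P := by
      have h5 : ∀ i, 2 * (t * w i) / (P:ℝ) = (2 * t / P) * w i := fun i => by ring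
      simp only [h5]
      rw [← Finset.mul_sum, ← hWsum]
      field_simp
      nlinarith [htW]
    calc ∏ i, ((P:ℝ) - 1 + Real.exp (t * w i))
        ≤ ∏ i, ((P:ℝ) * Real.exp (2 * (t * w i) / P)) := by
          apply Finset.prod_le_prod
          · intro i _
            have := Real.exp_pos (t * w i); linarith
          · intro i _
            have hx0 : 0 ≤ t * w i := mul_nonneg ht.le (hw i)
            have h6 := exp_le_one_add_two_mul hx0 (htw i)
            have h7 := mul_le_mul_of_nonneg_left
              (Real.add_one_le_exp (2 * (t * w i) / (P:ℝ))) hP0.le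
            have hd : (P:ℝ) * (2 * (t * w i) / P + 1) = 2 * (t * w i) + P := by
              field_simp
            linarith
      _ = (P:ℝ)^m * Real.exp (∑ i, 2 * (t * w i) / P) := by
          rw [Finset.prod_mul_distrib, Finset.prod_const, Real.exp_sum]
          simp [Finset.card_univ]
      _ = (P:ℝ)^m * (P:ℝ)^2 := by
          rw [sum_eq, show (2:ℝ) * Real.log P = Real.log ((P:ℝ)^2) by
            rw [Real.log_pow]; push_cast; ring]
          rw [Real.exp_log (by positivity)]
  -- Markov per bin
  have bad_bound : ∀ b : Fin P,
      ((Finset.univ.filter (fun f : Fin m → Fin P => ¬ load f b ≤ 4*W/P)).card : ℝ)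
        ≤ (P:ℝ)^m / (P:ℝ)^2 := by
    intro b
    set s := Finset.univ.filter (fun f : Fin m → Fin P => ¬ load f b ≤ 4*W/P) with hs
    have hexp4 : Real.exp (t * (4*W/P)) = (P:ℝ)^4 := by
      have h8 : t * (4*W/P) = Real.log ((P:ℝ)^4) := by
        rw [Real.log_pow]; push_cast
        field_simp
        nlinarith [htW]
      rw [h8, Real.exp_log (by positivity)]
    have step1 : (s.card : ℝ) * (P:ℝ)^4 ≤ ∑ f ∈ s, Real.exp (t * load f b) := by
      have := Finset.card_nsmul_le_sum s (fun f => Real.exp (t * load f b)) ((P:ℝ)^4) ?_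
      · simpa [nsmul_eq_mul] using this
      · intro f hf
        rw [hs, Finset.mem_filter] at hf
        have hlt : 4*W/P < load f b := lt_of_not_ge hf.2
        rw [← hexp4]
        exact Real.exp_le_exp.2 (mul_le_mul_of_nonneg_left hlt.le ht.le)
    have step2 : ∑ f ∈ s, Real.exp (t * load f b) ≤ ∑ f : Fin m → Fin P, Real.exp (t * load f b) :=
      Finset.sum_le_sum_of_subset_of_nonneg (Finset.filter_subset _ _)
        (fun f _ _ => (Real.exp_pos _).le)
    have h9 : (s.card : ℝ) * (P:ℝ)^4 ≤ (P:ℝ)^m * (P:ℝ)^2 := by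
      calc (s.card : ℝ) * (P:ℝ)^4 ≤ _ := step1
        _ ≤ _ := step2
        _ = _ := key b
        _ ≤ (P:ℝ)^m * (P:ℝ)^2 := prod_bound
    have h10 : (s.card:ℝ) * (P:ℝ)^2 * (P:ℝ)^2 = (s.card:ℝ) * (P:ℝ)^4 := by ring
    rw [le_div_iff₀ (pow_pos hP0 2), ← mul_le_mul_iff_of_pos_right (pow_pos hP0 2), h10]
    exact h9
  -- assemble
  set good : Finset (Fin m → Fin P) :=
    Finset.univ.filter (fun f => ∀ b, load f b ≤ 4*W/P) with hgood
  set bad : Finset (Fin m → Fin P) :=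
    Finset.univ.filter (fun f => ¬ ∀ b, load f b ≤ 4*W/P) with hbadset
  have hcard : good.card + bad.card = P^m := by
    rw [hgood, hbadset, Finset.card_filter_add_card_filter_not]
    simp [Finset.card_univ]
  have hbad : (bad.card : ℝ) ≤ (P:ℝ)^m / (P:ℝ) := by
    have hsub : bad ⊆ Finset.univ.biUnion
        (fun b => Finset.univ.filter (fun f : Fin m → Fin P => ¬ load f b ≤ 4*W/P)) := by
      intro f hf
      rw [hbadset, Finset.mem_filter] at hf
      push_neg at hf
      obtain ⟨b, hb⟩ := hf.2
      simp only [Finset.mem_biUnion, Finset.mem_filter, Finset.mem_univ, true_and]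
      exact ⟨b, not_le.2 hb⟩
    calc (bad.card : ℝ) ≤ ((Finset.univ.biUnion
          (fun b => Finset.univ.filter (fun f : Fin m → Fin P => ¬ load f b ≤ 4*W/P))).card : ℝ) := by
          exact_mod_cast Finset.card_le_card hsub
      _ ≤ ∑ b : Fin P, ((Finset.univ.filter (fun f : Fin m → Fin P => ¬ load f b ≤ 4*W/P)).card : ℝ) := by
          exact_mod_cast Finset.card_biUnion_le
      _ ≤ ∑ _b : Fin P, (P:ℝ)^m / (P:ℝ)^2 := Finset.sum_le_sum (fun b _ => bad_bound b)
      _ = (P:ℝ) * ((P:ℝ)^m / (P:ℝ)^2) := by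
          rw [Finset.sum_const, Finset.card_univ, Fintype.card_fin, nsmul_eq_mul]
      _ = (P:ℝ)^m / (P:ℝ) := by field_simp
  have hset : (Set.ncard {f : Fin m → Fin P |
      ∀ b : Fin P, (∑ i ∈ Finset.univ.filter (fun i => f i = b), w i) ≤ 4 * W / P} : ℝ)
      = (good.card : ℝ) := by
    congr 1
    rw [Set.ncard_eq_toFinset_card']
    congr 1
    ext f
    simp [hgood, hload]
  rw [hset, ge_iff_le, le_div_iff₀ (by positivity : (0:ℝ) < (P:ℝ)^m)]
  have hgc : (good.card : ℝ) = (P:ℝ)^m - (bad.card : ℝ) := by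
    have h11 : ((good.card + bad.card : ℕ) : ℝ) = ((P^m : ℕ) : ℝ) := by rw [hcard]
    push_cast at h11
    linarith
  have heq : (1 - 1/(P:ℝ)) * (P:ℝ)^m = (P:ℝ)^m - (P:ℝ)^m/(P:ℝ) := by
    field_simp
  linarith
end

section
/- For every real constant a ≥ 1 there exists a constant ε > 0 such that the following holds for every integer P ≥ 2: if w_1, …, w_m are nonnegative real weights with total W = Σ_{i=1}^m w_i > 0 and w_i ≤ ε·W/(P·ln P) for every i, and each ball i is placed into one of P bins independently and uniformly at random, then with probability at least 1 − P^{−a}, every bin receives total weight at least W/(2P) and at most 2W/P. -/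
open Finset Real

/-- Markov/Chernoff-type counting bound for one bin. -/
lemma tail_count {m P : ℕ} (hP : 0 < P) (w : Fin m → ℝ) (hw : ∀ i, 0 ≤ w i)
    (c t : ℝ) (hwc : ∀ i, w i ≤ c) (ht : |t| * c ≤ 1) (b : Fin P) (u : ℝ) :
    ((Finset.univ.filter (fun f : Fin m → Fin P =>
        u ≤ t * ∑ i ∈ Finset.univ.filter (fun i => f i = b), w i)).card : ℝ)
      ≤ (P : ℝ) ^ m *
        Real.exp ((t * (∑ i, w i) + t ^ 2 * c * (∑ i, w i)) / P - u) := by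
  set X : (Fin m → Fin P) → ℝ := fun f => ∑ i ∈ Finset.univ.filter (fun i => f i = b), w i
  have hPR : (0:ℝ) < P := by exact_mod_cast hP
  -- Step 1: Markov
  have h1 : ((Finset.univ.filter (fun f : Fin m → Fin P => u ≤ t * X f)).card : ℝ) * Real.exp u
      ≤ ∑ f : Fin m → Fin P, Real.exp (t * X f) := by
    calc ((Finset.univ.filter (fun f : Fin m → Fin P => u ≤ t * X f)).card : ℝ) * Real.exp u
        = ∑ f ∈ Finset.univ.filter (fun f : Fin m → Fin P => u ≤ t * X f), Real.exp u := by
          rw [Finset.sum_const, nsmul_eq_mul]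
      _ ≤ ∑ f ∈ Finset.univ.filter (fun f : Fin m → Fin P => u ≤ t * X f), Real.exp (t * X f) := by
          refine Finset.sum_le_sum fun f hf => Real.exp_le_exp.2 ?_
          exact (Finset.mem_filter.1 hf).2
      _ ≤ ∑ f : Fin m → Fin P, Real.exp (t * X f) := by
          refine Finset.sum_le_sum_of_subset_of_nonneg (Finset.filter_subset _ _) ?_
          intro f _ _; positivity
  -- Step 2: product formula
  have h2 : ∑ f : Fin m → Fin P, Real.exp (t * X f)
      = ∏ i : Fin m, ((P : ℝ) - 1 + Real.exp (t * w i)) := by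
    have hX : ∀ f : Fin m → Fin P, Real.exp (t * X f)
        = ∏ i : Fin m, Real.exp (t * (if f i = b then w i else 0)) := by
      intro f
      rw [← Real.exp_sum]
      congr 1
      rw [← Finset.mul_sum]
      congr 1
      simp [X, Finset.sum_filter]
    calc ∑ f : Fin m → Fin P, Real.exp (t * X f)
        = ∑ f : Fin m → Fin P, ∏ i : Fin m, Real.exp (t * (if f i = b then w i else 0)) := by
          exact Finset.sum_congr rfl fun f _ => hX f
      _ = ∏ i : Fin m, ∑ k : Fin P, Real.exp (t * (if k = b then w i else 0)) :=
          (Fintype.prod_sum (fun (i : Fin m) (k : Fin P) => Real.exp (t * (if k = b then w i else 0)))).symm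
      _ = ∏ i : Fin m, ((P : ℝ) - 1 + Real.exp (t * w i)) := by
          refine Finset.prod_congr rfl fun i _ => ?_
          have : ∀ k : Fin P, Real.exp (t * (if k = b then w i else 0))
              = (if k = b then Real.exp (t * w i) - 1 else 0) + 1 := by
            intro k; by_cases h : k = b <;> simp [h]
          rw [Finset.sum_congr rfl fun k _ => this k, Finset.sum_add_distrib,
            Finset.sum_ite_eq' Finset.univ b, Finset.sum_const]
          simp [Finset.card_univ]
          ring
  -- Step 3: per-factor bound
  have h3 : ∏ i : Fin m, ((P : ℝ) - 1 + Real.exp (t * w i))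
      ≤ ∏ i : Fin m, ((P : ℝ) * Real.exp ((t * w i + t ^ 2 * c * w i) / P)) := by
    refine Finset.prod_le_prod (fun i _ => ?_) (fun i _ => ?_)
    · have h1P : (1:ℝ) ≤ P := by exact_mod_cast hP
      have := Real.exp_pos (t * w i)
      linarith
    · have hx : |t * w i| ≤ 1 := by
        rw [abs_mul, abs_of_nonneg (hw i)]
        calc |t| * w i ≤ |t| * c := by
              rcases eq_or_lt_of_le (abs_nonneg t) with h | h
              · simp [← h]
              · exact mul_le_mul_of_nonneg_left (hwc i) (abs_nonneg t)
          _ ≤ 1 := ht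
      have hexp : Real.exp (t * w i) ≤ 1 + t * w i + (t * w i) ^ 2 := by
        have h := Real.exp_bound hx (n := 2) (by norm_num)
        have h2' : ∑ j ∈ Finset.range 2, (t * w i) ^ j / (j.factorial : ℝ) = 1 + t * w i := by
          simp [Finset.sum_range_succ]
        rw [h2'] at h
        norm_num [Nat.factorial] at h
        have h' := (abs_le.1 h).2
        have hab : |t * w i| ^ 2 = (t * w i) ^ 2 := sq_abs _
        nlinarith [sq_nonneg (t * w i), show (|t| * |w i|) ^ 2 = (t * w i) ^ 2 by rw [← abs_mul, sq_abs]]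
      have hsq : (t * w i) ^ 2 ≤ t ^ 2 * c * w i := by
        have : (t * w i) ^ 2 = t ^ 2 * w i * w i := by ring
        rw [this]
        have hwi := hw i
        have := hwc i
        nlinarith [mul_nonneg (mul_nonneg (sq_nonneg t) (hw i)) (sub_nonneg.2 (hwc i))]
      have key : (P : ℝ) - 1 + Real.exp (t * w i) ≤ (P : ℝ) + (t * w i + t ^ 2 * c * w i) := by
        linarith
      calc (P : ℝ) - 1 + Real.exp (t * w i) ≤ (P : ℝ) + (t * w i + t ^ 2 * c * w i) := key
        _ = (P : ℝ) * (1 + (t * w i + t ^ 2 * c * w i) / P) := by field_simp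
        _ ≤ (P : ℝ) * Real.exp ((t * w i + t ^ 2 * c * w i) / P) := by
            refine mul_le_mul_of_nonneg_left ?_ (le_of_lt hPR)
            rw [add_comm]
            exact Real.add_one_le_exp _
  -- Step 4: collapse product
  have h4 : ∏ i : Fin m, ((P : ℝ) * Real.exp ((t * w i + t ^ 2 * c * w i) / P))
      = (P : ℝ) ^ m * Real.exp ((t * (∑ i, w i) + t ^ 2 * c * (∑ i, w i)) / P) := by
    rw [Finset.prod_mul_distrib, Finset.prod_const, ← Real.exp_sum]
    congr 1
    · simp [Finset.card_univ]
    · rw [← Finset.sum_div]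
      congr 1
      rw [Finset.mul_sum, Finset.mul_sum, ← Finset.sum_add_distrib]
  -- combine
  have hcomb : ((Finset.univ.filter (fun f : Fin m → Fin P => u ≤ t * X f)).card : ℝ) * Real.exp u
      ≤ (P : ℝ) ^ m * Real.exp ((t * (∑ i, w i) + t ^ 2 * c * (∑ i, w i)) / P) := by
    rw [h2] at h1
    exact h1.trans (h3.trans_eq h4)
  have hu : Real.exp u > 0 := Real.exp_pos u
  have final : ((Finset.univ.filter (fun f : Fin m → Fin P => u ≤ t * X f)).card : ℝ)
      ≤ (P : ℝ) ^ m * Real.exp ((t * (∑ i, w i) + t ^ 2 * c * (∑ i, w i)) / P - u) := by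
    rw [Real.exp_sub]
    calc ((Finset.univ.filter (fun f : Fin m → Fin P => u ≤ t * X f)).card : ℝ)
        = ((Finset.univ.filter (fun f : Fin m → Fin P => u ≤ t * X f)).card : ℝ)
            * Real.exp u / Real.exp u := by field_simp
      _ ≤ ((P : ℝ) ^ m * Real.exp ((t * (∑ i, w i) + t ^ 2 * c * (∑ i, w i)) / P))
            / Real.exp u := by gcongr
      _ = (P : ℝ) ^ m * (Real.exp ((t * (∑ i, w i) + t ^ 2 * c * (∑ i, w i)) / P)
            / Real.exp u) := by ring
  exact final

set_option maxHeartbeats 2000000 in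
/-- **Weighted balls into bins, two-sided.**
For every real constant `a ≥ 1` there exists a constant `ε > 0` such that for every integer
`P ≥ 2`: if `w 1, …, w m` are nonnegative real weights with total `W = ∑ i, w i > 0` and
`w i ≤ ε·W/(P·ln P)` for every `i`, and each ball `i` is placed into one of `P` bins
independently and uniformly at random (modeled by the uniform distribution on the function
space `Fin m → Fin P`), then with probability at least `1 - P^(-a)`, every bin receives total
weight at least `W/(2P)` and at most `2W/P`. -/
theorem weighted_balls_into_bins_two_sided :
    ∀ a : ℝ, 1 ≤ a →
      ∃ ε : ℝ, 0 < ε ∧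
        ∀ (m P : ℕ), 2 ≤ P →
          ∀ w : Fin m → ℝ, (∀ i, 0 ≤ w i) →
            ∀ W : ℝ, W = ∑ i, w i → 0 < W →
              (∀ i, w i ≤ ε * W / (P * Real.log P)) →
              ((Set.ncard {f : Fin m → Fin P |
                  ∀ b : Fin P,
                    W / (2 * P) ≤ (∑ i ∈ Finset.univ.filter (fun i => f i = b), w i) ∧
                    (∑ i ∈ Finset.univ.filter (fun i => f i = b), w i) ≤ 2 * W / P} : ℝ)
                / (P : ℝ) ^ m) ≥ 1 - (P : ℝ) ^ (-a) := by
  intro a ha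
  have ha2 : (0:ℝ) < a + 2 := by linarith
  refine ⟨1 / (16 * (a + 2)), by positivity, ?_⟩
  intro m P hP2 w hw W hWsum hW hwle
  set ε : ℝ := 1 / (16 * (a + 2)) with hεdef
  have hε : 0 < ε := by positivity
  have hP0 : 0 < P := by omega
  have hPR : (2:ℝ) ≤ (P:ℝ) := by exact_mod_cast hP2
  have hP0R : (0:ℝ) < (P:ℝ) := by linarith
  have hL : 0 < Real.log P := Real.log_pos (by linarith)
  set L : ℝ := Real.log P with hLdef
  set c : ℝ := ε * W / (P * L) with hcdef
  have hc : 0 < c := by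
    apply div_pos (by positivity)
    positivity
  set t : ℝ := 1 / (4 * c) with htdef
  have ht0 : 0 < t := by positivity
  have htc : |t| * c ≤ 1 := by
    rw [abs_of_pos ht0, htdef]
    rw [div_mul_eq_mul_div, one_mul, div_le_one (by positivity)]
    linarith
  have htc' : |(-t)| * c ≤ 1 := by rwa [abs_neg]
  set K : ℝ := (a + 2) * L with hKdef
  have hK : 0 < K := by positivity
  have hkey : W / ((P:ℝ) * c) = 16 * K := by
    rw [hcdef, hKdef, hεdef]
    field_simp
  -- exponent computations
  have e1 : (t * W + t ^ 2 * c * W) / P - t * (2 * W / P) = -(3 * K) := by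
    have : (t * W + t ^ 2 * c * W) / P - t * (2 * W / P) = (W / ((P:ℝ) * c)) * (-3/16) := by
      rw [htdef]
      field_simp
      ring
    rw [this, hkey]; ring
  have e2 : ((-t) * W + (-t) ^ 2 * c * W) / P - (-t) * (W / (2 * P)) = -K := by
    have : ((-t) * W + (-t) ^ 2 * c * W) / P - (-t) * (W / (2 * P)) = (W / ((P:ℝ) * c)) * (-1/16) := by
      rw [htdef]
      field_simp
      ring
    rw [this, hkey]; ring
  have hpowm : (0:ℝ) < (P:ℝ) ^ m := by positivity
  -- per-bin tail bounds
  have hhi : ∀ b : Fin P,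
      ((Finset.univ.filter (fun f : Fin m → Fin P =>
          2 * W / P < ∑ i ∈ Finset.univ.filter (fun i => f i = b), w i)).card : ℝ)
        ≤ (P:ℝ) ^ m * Real.exp (-K) := by
    intro b
    have hsub : (Finset.univ.filter (fun f : Fin m → Fin P =>
          2 * W / P < ∑ i ∈ Finset.univ.filter (fun i => f i = b), w i))
        ⊆ (Finset.univ.filter (fun f : Fin m → Fin P =>
          t * (2 * W / P) ≤ t * ∑ i ∈ Finset.univ.filter (fun i => f i = b), w i)) := by
      intro f hf
      simp only [Finset.mem_filter, Finset.mem_univ, true_and] at hf ⊢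
      exact mul_le_mul_of_nonneg_left hf.le ht0.le
    have h := tail_count hP0 w hw c t (fun i => by rw [hcdef]; exact hwle i) htc b (t * (2 * W / P))
    calc ((Finset.univ.filter (fun f : Fin m → Fin P =>
            2 * W / P < ∑ i ∈ Finset.univ.filter (fun i => f i = b), w i)).card : ℝ)
        ≤ ((Finset.univ.filter (fun f : Fin m → Fin P =>
            t * (2 * W / P) ≤ t * ∑ i ∈ Finset.univ.filter (fun i => f i = b), w i)).card : ℝ) := by
          exact_mod_cast Finset.card_le_card hsub
      _ ≤ (P:ℝ) ^ m * Real.exp ((t * (∑ i, w i) + t ^ 2 * c * (∑ i, w i)) / P - t * (2 * W / P)) := h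
      _ ≤ (P:ℝ) ^ m * Real.exp (-K) := by
          refine mul_le_mul_of_nonneg_left (Real.exp_le_exp.2 ?_) hpowm.le
          rw [← hWsum, e1]
          linarith
  have hlo : ∀ b : Fin P,
      ((Finset.univ.filter (fun f : Fin m → Fin P =>
          (∑ i ∈ Finset.univ.filter (fun i => f i = b), w i) < W / (2 * P))).card : ℝ)
        ≤ (P:ℝ) ^ m * Real.exp (-K) := by
    intro b
    have hsub : (Finset.univ.filter (fun f : Fin m → Fin P =>
          (∑ i ∈ Finset.univ.filter (fun i => f i = b), w i) < W / (2 * P)))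
        ⊆ (Finset.univ.filter (fun f : Fin m → Fin P =>
          (-t) * (W / (2 * P)) ≤ (-t) * ∑ i ∈ Finset.univ.filter (fun i => f i = b), w i)) := by
      intro f hf
      simp only [Finset.mem_filter, Finset.mem_univ, true_and] at hf ⊢
      have := mul_le_mul_of_nonpos_left hf.le (by linarith : (-t) ≤ 0)
      linarith
    have h := tail_count hP0 w hw c (-t) (fun i => by rw [hcdef]; exact hwle i) htc' b ((-t) * (W / (2 * P)))
    calc ((Finset.univ.filter (fun f : Fin m → Fin P =>
            (∑ i ∈ Finset.univ.filter (fun i => f i = b), w i) < W / (2 * P))).card : ℝ)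
        ≤ ((Finset.univ.filter (fun f : Fin m → Fin P =>
            (-t) * (W / (2 * P)) ≤ (-t) * ∑ i ∈ Finset.univ.filter (fun i => f i = b), w i)).card : ℝ) := by
          exact_mod_cast Finset.card_le_card hsub
      _ ≤ (P:ℝ) ^ m * Real.exp (((-t) * (∑ i, w i) + (-t) ^ 2 * c * (∑ i, w i)) / P - (-t) * (W / (2 * P))) := h
      _ ≤ (P:ℝ) ^ m * Real.exp (-K) := by
          refine mul_le_mul_of_nonneg_left (Real.exp_le_exp.2 ?_) hpowm.le
          rw [← hWsum, e2]
  -- the good set as a finset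
  set p : (Fin m → Fin P) → Prop := fun f => ∀ b : Fin P,
      W / (2 * P) ≤ (∑ i ∈ Finset.univ.filter (fun i => f i = b), w i) ∧
      (∑ i ∈ Finset.univ.filter (fun i => f i = b), w i) ≤ 2 * W / P with hpdef
  have hset : {f : Fin m → Fin P |
      ∀ b : Fin P,
        W / (2 * P) ≤ (∑ i ∈ Finset.univ.filter (fun i => f i = b), w i) ∧
        (∑ i ∈ Finset.univ.filter (fun i => f i = b), w i) ≤ 2 * W / P}
      = ↑(Finset.univ.filter p) := by
    ext f; simp [hpdef]
  rw [hset, Set.ncard_coe_finset, ge_iff_le, le_div_iff₀ hpowm]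
  -- bad set bound
  have hcards : (Finset.univ.filter p).card + (Finset.univ.filter (fun f => ¬ p f)).card
      = P ^ m := by
    rw [Finset.card_filter_add_card_filter_not, Finset.card_univ]
    simp [Fintype.card_fun]
  have hbadsub : Finset.univ.filter (fun f => ¬ p f) ⊆
      Finset.univ.biUnion (fun b : Fin P =>
        Finset.univ.filter (fun f : Fin m → Fin P =>
          (∑ i ∈ Finset.univ.filter (fun i => f i = b), w i) < W / (2 * P))
        ∪ Finset.univ.filter (fun f : Fin m → Fin P =>
          2 * W / P < ∑ i ∈ Finset.univ.filter (fun i => f i = b), w i)) := by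
    intro f hf
    simp only [Finset.mem_filter, Finset.mem_univ, true_and, hpdef] at hf
    push_neg at hf
    obtain ⟨b, hb⟩ := hf
    rw [Finset.mem_biUnion]
    refine ⟨b, Finset.mem_univ b, ?_⟩
    rw [Finset.mem_union]
    by_cases hcase : W / (2 * P) ≤ (∑ i ∈ Finset.univ.filter (fun i => f i = b), w i)
    · right
      simp only [Finset.mem_filter, Finset.mem_univ, true_and]
      exact hb hcase
    · left
      simp only [Finset.mem_filter, Finset.mem_univ, true_and]
      linarith [not_le.1 hcase]
  have hbad : ((Finset.univ.filter (fun f => ¬ p f)).card : ℝ)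
      ≤ (P:ℝ) * (2 * ((P:ℝ) ^ m * Real.exp (-K))) := by
    have h1 : (Finset.univ.filter (fun f => ¬ p f)).card
        ≤ ∑ b : Fin P,
          ((Finset.univ.filter (fun f : Fin m → Fin P =>
            (∑ i ∈ Finset.univ.filter (fun i => f i = b), w i) < W / (2 * P))
          ∪ Finset.univ.filter (fun f : Fin m → Fin P =>
            2 * W / P < ∑ i ∈ Finset.univ.filter (fun i => f i = b), w i)).card) :=
      (Finset.card_le_card hbadsub).trans (Finset.card_biUnion_le)
    calc ((Finset.univ.filter (fun f => ¬ p f)).card : ℝ)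
        ≤ ∑ b : Fin P,
          (((Finset.univ.filter (fun f : Fin m → Fin P =>
            (∑ i ∈ Finset.univ.filter (fun i => f i = b), w i) < W / (2 * P))
          ∪ Finset.univ.filter (fun f : Fin m → Fin P =>
            2 * W / P < ∑ i ∈ Finset.univ.filter (fun i => f i = b), w i)).card : ℝ)) := by
          exact_mod_cast h1
      _ ≤ ∑ _b : Fin P, (2 * ((P:ℝ) ^ m * Real.exp (-K))) := by
          refine Finset.sum_le_sum fun b _ => ?_
          have hcu := Finset.card_union_le
            (Finset.univ.filter (fun f : Fin m → Fin P =>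
              (∑ i ∈ Finset.univ.filter (fun i => f i = b), w i) < W / (2 * P)))
            (Finset.univ.filter (fun f : Fin m → Fin P =>
              2 * W / P < ∑ i ∈ Finset.univ.filter (fun i => f i = b), w i))
          have hcu' : ((Finset.univ.filter (fun f : Fin m → Fin P =>
              (∑ i ∈ Finset.univ.filter (fun i => f i = b), w i) < W / (2 * P))
            ∪ Finset.univ.filter (fun f : Fin m → Fin P =>
              2 * W / P < ∑ i ∈ Finset.univ.filter (fun i => f i = b), w i)).card : ℝ)
            ≤ ((Finset.univ.filter (fun f : Fin m → Fin P =>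
              (∑ i ∈ Finset.univ.filter (fun i => f i = b), w i) < W / (2 * P))).card : ℝ)
            + ((Finset.univ.filter (fun f : Fin m → Fin P =>
              2 * W / P < ∑ i ∈ Finset.univ.filter (fun i => f i = b), w i)).card : ℝ) := by
            exact_mod_cast hcu
          have := hlo b
          have := hhi b
          linarith
      _ = (P:ℝ) * (2 * ((P:ℝ) ^ m * Real.exp (-K))) := by
          rw [Finset.sum_const, Finset.card_univ, Fintype.card_fin, nsmul_eq_mul]
  -- arithmetic: 2 * P * exp (-K) ≤ P ^ (-a)
  have hexpP : Real.exp L = (P:ℝ) := Real.exp_log hP0R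
  have hrpow : (P:ℝ) ^ (-a) = Real.exp (L * (-a)) := by
    rw [Real.rpow_def_of_pos hP0R]
  have harith : (P:ℝ) * (2 * Real.exp (-K)) ≤ (P:ℝ) ^ (-a) := by
    rw [hrpow, ← hexpP, hKdef]
    have h2e : (2:ℝ) ≤ Real.exp L := by rw [hexpP]; exact hPR
    calc Real.exp L * (2 * Real.exp (-((a + 2) * L)))
        ≤ Real.exp L * (Real.exp L * Real.exp (-((a + 2) * L))) := by
          refine mul_le_mul_of_nonneg_left (mul_le_mul_of_nonneg_right h2e (Real.exp_nonneg _)) (Real.exp_nonneg _)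
      _ = Real.exp (L + (L + -((a + 2) * L))) := by rw [← Real.exp_add, ← Real.exp_add]
      _ ≤ Real.exp (L * (-a)) := by
          refine Real.exp_le_exp.2 ?_
          nlinarith [hL]
  -- finish
  have hgood : ((Finset.univ.filter p).card : ℝ)
      = (P:ℝ) ^ m - ((Finset.univ.filter (fun f => ¬ p f)).card : ℝ) := by
    have := congrArg (fun n : ℕ => (n : ℝ)) hcards
    push_cast at this
    linarith
  rw [hgood]
  have hPa : (0:ℝ) ≤ (P:ℝ) ^ (-a) := Real.rpow_nonneg hP0R.le _
  nlinarith [hbad, harith, hpowm, Real.exp_nonneg (-K),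
    mul_le_mul_of_nonneg_left harith hpowm.le]
end

section
/- Fix an integer C ≥ 1 and define meta-tasks inductively: a meta-task of level 0 carries exactly one task; for l ≥ 0, a meta-task of level l+1 consists of a list of k meta-tasks of level l with C+1 ≤ k ≤ 2C+1, and it carries the (disjoint) union of the tasks carried by these k children. If a collection of meta-tasks together carries n ≥ 1 tasks in total, then every meta-task in the collection has level at most log_{C+1} n; consequently, a meta-task set with chunk size C (at most C meta-tasks per level) built from n tasks contains at most C·(⌊log_{C+1} n⌋ + 1) meta-tasks. -/
/-- A meta-task of chunk size `C` over tasks of type `α`, indexed by its level: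
a meta-task of level `0` carries exactly one task; for `l ≥ 0`, a meta-task of level
`l+1` consists of a list (`Fin k`-indexed tuple) of `k` meta-tasks of level `l`
with `C+1 ≤ k ≤ 2C+1`. -/
inductive MetaTask (C : ℕ) (α : Type) : ℕ → Type
  | leaf (t : α) : MetaTask C α 0
  | node {l k : ℕ} (h₁ : C + 1 ≤ k) (h₂ : k ≤ 2 * C + 1)
      (children : Fin k → MetaTask C α l) : MetaTask C α (l + 1)

/-- The multiset of tasks carried by a meta-task: a level-`0` meta-task carries its single
task, and a meta-task of level `l+1` carries the disjoint (multiset) union of the tasks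
carried by its children. -/
def MetaTask.tasks {C : ℕ} {α : Type} : {l : ℕ} → MetaTask C α l → Multiset α
  | _, .leaf t => {t}
  | _, .node _ _ children => ∑ i, (children i).tasks

lemma MetaTask.pow_le_card {C : ℕ} {α : Type} :
    ∀ {l : ℕ} (mt : MetaTask C α l), (C + 1) ^ l ≤ Multiset.card mt.tasks
  | _, .leaf t => by simp [tasks]
  | _, .node (l := l) (k := k) h₁ h₂ children => by
    have : ∀ i : Fin k, (C + 1) ^ l ≤ Multiset.card (children i).tasks :=
      fun i => (children i).pow_le_card
    calc (C + 1) ^ (l + 1) = (C + 1) * (C + 1) ^ l := by ring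
      _ ≤ k * (C + 1) ^ l := Nat.mul_le_mul_right _ h₁
      _ = ∑ _i : Fin k, (C + 1) ^ l := by simp [mul_comm]
      _ ≤ ∑ i : Fin k, Multiset.card (children i).tasks := Finset.sum_le_sum fun i _ => this i
      _ = Multiset.card (∑ i, (children i).tasks) := (map_sum Multiset.cardHom _ _).symm
      _ = _ := rfl

lemma list_length_le {β : Type} [DecidableEq ℕ] (f : β → ℕ) :
    ∀ (s : List β) (L : ℕ), (∀ p ∈ s, f p ≤ L) →
      s.length = ∑ l ∈ Finset.range (L + 1), (s.filter (fun p => f p = l)).length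
  | [], L, _ => by simp
  | p :: s, L, h => by
    have ih := list_length_le f s L (fun q hq => h q (List.mem_cons_of_mem _ hq))
    have hp : f p ∈ Finset.range (L + 1) := Finset.mem_range.2 (Nat.lt_succ_of_le (h p (.head _)))
    have heach : ∀ l, ((p :: s).filter (fun q => f q = l)).length =
        (if f p = l then 1 else 0) + (s.filter (fun q => f q = l)).length := by
      intro l
      by_cases hl : f p = l <;> simp [List.filter_cons, hl, add_comm]
    rw [Finset.sum_congr rfl (fun l _ => heach l), Finset.sum_add_distrib,
      Finset.sum_ite_eq (Finset.range (L+1)) (f p) (fun _ => 1)]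
    simp [hp, ← ih, add_comm]

/-- **Meta-task level and count bounds.** Fix an integer `C ≥ 1`.  If a collection `mts` of
meta-tasks (a list of meta-tasks of arbitrary levels) together carries `n ≥ 1` tasks in
total, then every meta-task in the collection has level at most `log_{C+1} n`; consequently,
if the collection is a meta-task set of chunk size `C` (at most `C` meta-tasks per level),
then it contains at most `C·(⌊log_{C+1} n⌋ + 1)` meta-tasks. -/
theorem metaTask_level_and_count_bounds {α : Type} {C : ℕ} (hC : 1 ≤ C)
    (mts : List ((l : ℕ) × MetaTask C α l)) (n : ℕ)
    (hn : (n : ℕ) = Multiset.card (mts.map (fun p => p.2.tasks)).sum)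
    (hn1 : 1 ≤ n) :
    (∀ p ∈ mts, (p.1 : ℝ) ≤ Real.log n / Real.log (C + 1)) ∧
    ((∀ l : ℕ, (mts.filter (fun p => p.1 = l)).length ≤ C) →
      mts.length ≤ C * (⌊Real.log n / Real.log (C + 1)⌋₊ + 1)) := by
  have hlogpos : 0 < Real.log (C + 1) := by
    apply Real.log_pos
    have : (1:ℝ) ≤ (C:ℝ) := by exact_mod_cast hC
    linarith
  have key : ∀ p ∈ mts, (p.1 : ℝ) ≤ Real.log n / Real.log (C + 1) := by
    intro p hp
    have hcard : Multiset.card p.2.tasks ≤ n := by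
      rw [hn]
      have : p.2.tasks ≤ (mts.map (fun p => p.2.tasks)).sum :=
        List.le_sum_of_mem (List.mem_map.2 ⟨p, hp, rfl⟩)
      exact Multiset.card_le_card this
    have hpow : (C + 1) ^ p.1 ≤ n := le_trans p.2.pow_le_card hcard
    have hreal : ((C:ℝ) + 1) ^ p.1 ≤ (n : ℝ) := by exact_mod_cast hpow
    have := Real.log_le_log (by positivity) hreal
    rw [Real.log_pow] at this
    rw [le_div_iff₀ hlogpos]
    linarith
  refine ⟨key, fun hfilter => ?_⟩
  set L := ⌊Real.log n / Real.log (C + 1)⌋₊ with hL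
  have hle : ∀ p ∈ mts, p.1 ≤ L := by
    intro p hp
    exact Nat.le_floor (key p hp)
  rw [list_length_le (fun p => p.1) mts L hle]
  calc ∑ l ∈ Finset.range (L + 1), (mts.filter (fun p => p.1 = l)).length
      ≤ ∑ _l ∈ Finset.range (L + 1), C := Finset.sum_le_sum fun l _ => hfilter l
    _ = C * (L + 1) := by simp [mul_comm]
end

section
/- Fix an integer C ≥ 1. The merge of two meta-task sets with chunk size C proceeds level by level from the lowest level upward: at each level l, the meta-tasks of level l from both sets (together with at most one carry meta-task produced from level l−1) are combined; if their number exceeds C, all of them are removed and replaced by a single new meta-task of level l+1 whose children they are. Then: (i) the result is again a meta-task set with at most C meta-tasks per level; (ii) if the two input sets have maximum levels L₁ and L₂, the result has maximum level at most max(L₁, L₂) + 1; and (iii) the multiset of tasks carried by the result equals the disjoint union of the multisets of tasks carried by the two inputs. -/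
/-- A meta-task set with chunk size `C`: for each level `l` it holds a list of meta-tasks
of level `l`, with at most `C` meta-tasks per level. -/
structure MetaTaskSet (C : ℕ) (α : Type) where
  items : (l : ℕ) → List (MetaTask C α l)
  bounded : ∀ l, (items l).length ≤ C

/-- One step of the merge at level `l`: the level-`l` meta-tasks of both sets, together
with the (at most one) carry meta-task produced from level `l-1`, are combined; if their
number exceeds `C`, all of them are removed and replaced by a single new meta-task of level
`l+1` whose children they are (which is carried to the next level). -/
def mergeStep {C : ℕ} {α : Type} {l : ℕ}
    (xs ys : List (MetaTask C α l)) (hx : xs.length ≤ C) (hy : ys.length ≤ C)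
    (carry : Option (MetaTask C α l)) :
    List (MetaTask C α l) × Option (MetaTask C α (l + 1)) :=
  if h : C < (xs ++ ys ++ carry.toList).length then
    ([], some (MetaTask.node (k := (xs ++ ys ++ carry.toList).length)
      (by omega)
      (by
        have hc : carry.toList.length ≤ 1 := by cases carry <;> simp
        simp only [List.length_append]
        try simp only [List.length_append] at hc ⊢
        omega)
      (xs ++ ys ++ carry.toList).get))
  else (xs ++ ys ++ carry.toList, none)

/-- The carry meta-task entering level `l` of the merge (produced at level `l-1`);
the merge proceeds level by level from the lowest level upward. -/
def mergeCarry {C : ℕ} {α : Type} (S₁ S₂ : MetaTaskSet C α) :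
    (l : ℕ) → Option (MetaTask C α l)
  | 0 => none
  | l + 1 =>
    (mergeStep (S₁.items l) (S₂.items l) (S₁.bounded l) (S₂.bounded l)
      (mergeCarry S₁ S₂ l)).2

/-- The merge of two meta-task sets with chunk size `C`, proceeding level by level from the
lowest level upward with at most one carry between consecutive levels. -/
def MetaTaskSet.merge {C : ℕ} {α : Type} (S₁ S₂ : MetaTaskSet C α) : MetaTaskSet C α where
  items l := (mergeStep (S₁.items l) (S₂.items l) (S₁.bounded l) (S₂.bounded l)
      (mergeCarry S₁ S₂ l)).1
  bounded l := by
    dsimp only [mergeStep]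
    split
    · simp
    · next h => simp only [List.length_append] at h ⊢; omega

/-- The multiset of all tasks carried by the meta-tasks of levels `< N` of a meta-task
set. -/
def MetaTaskSet.tasksUpTo {C : ℕ} {α : Type} (S : MetaTaskSet C α) (N : ℕ) : Multiset α :=
  ∑ l ∈ Finset.range N, ((S.items l).map MetaTask.tasks).sum

def carryTasks {C : ℕ} {α : Type} {l : ℕ} : Option (MetaTask C α l) → Multiset α
  | none => 0
  | some m => m.tasks

lemma node_tasks {C : ℕ} {α : Type} {l : ℕ} (L : List (MetaTask C α l)) (h1 h2) :
    (MetaTask.node (k := L.length) h1 h2 L.get).tasks = (L.map MetaTask.tasks).sum := by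
  simp [MetaTask.tasks]

lemma mergeStep_tasks {C : ℕ} {α : Type} {l : ℕ}
    (xs ys : List (MetaTask C α l)) (hx : xs.length ≤ C) (hy : ys.length ≤ C)
    (carry : Option (MetaTask C α l)) :
    ((mergeStep xs ys hx hy carry).1.map MetaTask.tasks).sum
      + carryTasks (mergeStep xs ys hx hy carry).2
    = (xs.map MetaTask.tasks).sum + (ys.map MetaTask.tasks).sum + carryTasks carry := by
  rw [mergeStep]
  split
  · simp only [List.map_nil, List.sum_nil, zero_add, carryTasks, node_tasks]
    cases carry <;> simp [carryTasks, add_assoc]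
  · cases carry <;> simp [carryTasks, add_assoc]

lemma mergeStep_snd_none {C : ℕ} {α : Type} {l : ℕ} (hC : 1 ≤ C)
    (xs ys : List (MetaTask C α l)) (hx : xs.length ≤ C) (hy : ys.length ≤ C)
    (carry : Option (MetaTask C α l)) (hxe : xs = []) (hye : ys = []) :
    (mergeStep xs ys hx hy carry).2 = none := by
  subst hxe hye
  rw [mergeStep]
  split
  · next h => exfalso; cases carry <;> simp at h <;> omega
  · rfl

lemma mergeStep_fst_nil {C : ℕ} {α : Type} {l : ℕ}
    (xs ys : List (MetaTask C α l)) (hx : xs.length ≤ C) (hy : ys.length ≤ C)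
    (carry : Option (MetaTask C α l)) (hxe : xs = []) (hye : ys = [])
    (hce : carry = none) :
    (mergeStep xs ys hx hy carry).1 = [] := by
  subst hxe hye hce
  rw [mergeStep]
  split <;> rfl

lemma mergeCarry_none {C : ℕ} {α : Type} (hC : 1 ≤ C)
    (S₁ S₂ : MetaTaskSet C α) (L₁ L₂ : ℕ)
    (hL₁ : ∀ l, L₁ < l → S₁.items l = [])
    (hL₂ : ∀ l, L₂ < l → S₂.items l = []) :
    ∀ l, max L₁ L₂ + 2 ≤ l → mergeCarry S₁ S₂ l = none := by
  intro l hl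
  match l with
  | 0 => omega
  | n + 1 =>
    rw [mergeCarry]
    exact mergeStep_snd_none hC _ _ _ _ _ (hL₁ n (by omega)) (hL₂ n (by omega))

/-- **Correctness of merging meta-task sets.** Fix an integer `C ≥ 1` and two meta-task sets
`S₁, S₂` with chunk size `C` whose maximum levels are (at most) `L₁` and `L₂`.  Then:
(i) the merge is again a meta-task set with at most `C` meta-tasks per level;
(ii) the merge has maximum level at most `max L₁ L₂ + 1`, i.e. it has no meta-tasks at any
level above `max L₁ L₂ + 1`; and
(iii) the multiset of tasks carried by the merge equals the disjoint (multiset) union of the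
multisets of tasks carried by the two inputs (all tasks live at levels below any
`N ≥ max L₁ L₂ + 2`). -/
theorem metaTaskSet_merge_spec {α : Type} {C : ℕ} (hC : 1 ≤ C)
    (S₁ S₂ : MetaTaskSet C α) (L₁ L₂ : ℕ)
    (hL₁ : ∀ l, L₁ < l → S₁.items l = [])
    (hL₂ : ∀ l, L₂ < l → S₂.items l = []) :
    (∀ l, ((S₁.merge S₂).items l).length ≤ C) ∧
    (∀ l, max L₁ L₂ + 1 < l → (S₁.merge S₂).items l = []) ∧
    (∀ N, max L₁ L₂ + 2 ≤ N →
      (S₁.merge S₂).tasksUpTo N = S₁.tasksUpTo N + S₂.tasksUpTo N) := by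
  refine ⟨(S₁.merge S₂).bounded, ?_, ?_⟩
  · -- (ii)
    intro l hl
    exact mergeStep_fst_nil _ _ _ _ _ (hL₁ l (by omega)) (hL₂ l (by omega))
      (mergeCarry_none hC S₁ S₂ L₁ L₂ hL₁ hL₂ l (by omega))
  · -- (iii)
    have key : ∀ N, (S₁.merge S₂).tasksUpTo N + carryTasks (mergeCarry S₁ S₂ N)
        = S₁.tasksUpTo N + S₂.tasksUpTo N := by
      intro N
      induction N with
      | zero => simp [MetaTaskSet.tasksUpTo, mergeCarry, carryTasks]
      | succ n ih =>
        simp only [MetaTaskSet.tasksUpTo, Finset.sum_range_succ] at ih ⊢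
        rw [mergeCarry]
        have hstep := mergeStep_tasks (S₁.items n) (S₂.items n) (S₁.bounded n) (S₂.bounded n)
          (mergeCarry S₁ S₂ n)
        show (∑ l ∈ Finset.range n, (((S₁.merge S₂).items l).map MetaTask.tasks).sum)
            + (((mergeStep (S₁.items n) (S₂.items n) (S₁.bounded n) (S₂.bounded n)
                (mergeCarry S₁ S₂ n)).1).map MetaTask.tasks).sum
            + carryTasks (mergeStep (S₁.items n) (S₂.items n) (S₁.bounded n) (S₂.bounded n)
                (mergeCarry S₁ S₂ n)).2 = _
        rw [add_assoc, hstep, show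
          ∑ l ∈ Finset.range n, (List.map MetaTask.tasks (S₁.items l)).sum +
            (List.map MetaTask.tasks (S₁.items n)).sum +
            (∑ l ∈ Finset.range n, (List.map MetaTask.tasks (S₂.items l)).sum +
              (List.map MetaTask.tasks (S₂.items n)).sum)
          = (∑ l ∈ Finset.range n, (List.map MetaTask.tasks (S₁.items l)).sum +
              ∑ l ∈ Finset.range n, (List.map MetaTask.tasks (S₂.items l)).sum) +
            ((List.map MetaTask.tasks (S₁.items n)).sum +
              (List.map MetaTask.tasks (S₂.items n)).sum)
          from by abel, ← ih]
        abel
    intro N hN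
    have := key N
    rwa [mergeCarry_none hC S₁ S₂ L₁ L₂ hL₁ hL₂ N hN, carryTasks, add_zero] at this
end
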